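/- For every irreducible fraction c/d ∈ [0,1] and positive integer n, the maximum of |A|·|B| over all c/d-cross-intersecting pairs (A,B) of families of subsets of {1,...,n} equals exactly 2^n. -/

import Mathlib

open Finset Module

theorem frac_cross_max (n c d : ℕ) (hn : 0 < n) (hd : 0 < d) (hcd : c ≤ d)
    (hcop : Nat.Coprime c d) :
    IsGreatest {N : ℕ | ∃ A B : Finset (Finset (Fin n)),
      (∀ a ∈ A, ∀ b ∈ B, d * (a ∩ b).card = c * b.card) ∧ N = A.card * B.card}
      (2 ^ n) := by
  constructor
  · refine ⟨Finset.univ, {∅}, by simp, ?_⟩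
    simp [Finset.card_univ, Fintype.card_finset]
  · rintro N ⟨A, B, hAB, rfl⟩
    classical
    rcases A.eq_empty_or_nonempty with rfl | ⟨a0, ha0⟩
    · simp
    let φ : Finset (Fin n) → (Fin n → ZMod 2) := fun s i => if i ∈ s then 1 else 0
    have hφ : Function.Injective φ := by
      intro s t h
      ext i
      have h' := congrFun h i
      by_cases hs : i ∈ s <;> by_cases ht : i ∈ t <;>
        simp [φ, hs, ht] at h' ⊢
    let Bl : LinearMap.BilinForm (ZMod 2) (Fin n → ZMod 2) :=
      LinearMap.mk₂ (ZMod 2) (fun x y => ∑ i, x i * y i)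
        (fun m m' nn => by
          simp only [Pi.add_apply, add_mul]
          exact Finset.sum_add_distrib)
        (fun cc m nn => by
          simp only [Pi.smul_apply, smul_eq_mul, Finset.mul_sum, mul_assoc])
        (fun m nn nn' => by
          simp only [Pi.add_apply, mul_add]
          exact Finset.sum_add_distrib)
        (fun cc m nn => by
          simp only [Pi.smul_apply, smul_eq_mul, Finset.mul_sum]
          exact Finset.sum_congr rfl fun i _ => by ring)
    have hBl : ∀ x y : Fin n → ZMod 2, Bl x y = ∑ i, x i * y i := fun x y => rfl
    have hdot : ∀ s t : Finset (Fin n), Bl (φ s) (φ t) = ((s ∩ t).card : ZMod 2) := by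
      intro s t
      rw [hBl]
      have h1 : ∀ i, φ s i * φ t i = if i ∈ s ∩ t then (1 : ZMod 2) else 0 := by
        intro i
        by_cases hs : i ∈ s <;> by_cases ht : i ∈ t <;> simp [φ, hs, ht]
      rw [Finset.sum_congr rfl fun i _ => h1 i, Finset.sum_ite_mem, Finset.univ_inter,
        Finset.sum_const, nsmul_eq_mul, mul_one]
    have hsymm : ∀ x y : Fin n → ZMod 2, Bl x y = Bl y x := by
      intro x y
      rw [hBl, hBl]
      exact Finset.sum_congr rfl fun i _ => mul_comm _ _
    have hrefl : Bl.IsRefl := fun x y hxy => by rw [hsymm]; exact hxy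
    have hnd : Bl.Nondegenerate := by
      have hsep : ∀ x : Fin n → ZMod 2, (∀ y, Bl x y = 0) → x = 0 := by
        intro x hx
        ext i
        have h2 := hx (Pi.single i 1)
        rw [hBl] at h2
        simpa [Pi.single_apply, mul_ite, Finset.sum_ite_eq'] using h2
      exact ⟨hsep, fun y hy => hsep y fun x => by rw [hsymm]; exact hy x⟩
    set W : Submodule (ZMod 2) (Fin n → ZMod 2) :=
      Submodule.span (ZMod 2) (φ '' ↑B) with hW
    set U : Submodule (ZMod 2) (Fin n → ZMod 2) := Bl.orthogonal W with hU
    have key : ∀ a ∈ A, φ a - φ a0 ∈ U := by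
      intro a ha
      rw [hU, LinearMap.BilinForm.mem_orthogonal_iff]
      intro w hw
      have hle : W ≤ LinearMap.ker (Bl.flip (φ a - φ a0)) := by
        rw [hW, Submodule.span_le]
        rintro _ ⟨b, hb, rfl⟩
        simp only [SetLike.mem_coe, LinearMap.mem_ker, LinearMap.flip_apply]
        have hcard : (b ∩ a).card = (b ∩ a0).card := by
          rw [Finset.inter_comm b a, Finset.inter_comm b a0]
          exact Nat.eq_of_mul_eq_mul_left hd
            ((hAB a ha b hb).trans (hAB a0 ha0 b hb).symm)
        show Bl (φ b) (φ a - φ a0) = 0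
        rw [map_sub, hdot, hdot, hcard, sub_self]
      have h3 := hle hw
      simp only [LinearMap.mem_ker, LinearMap.flip_apply] at h3
      simpa [LinearMap.BilinForm.IsOrtho] using h3
    letI : Fintype U := Fintype.ofFinite U
    letI : Fintype W := Fintype.ofFinite W
    have hA : A.card ≤ Fintype.card U := by
      rw [← Fintype.card_coe A]
      refine Fintype.card_le_of_injective
        (fun a => ⟨φ a.1 - φ a0, key a.1 a.2⟩) ?_
      rintro ⟨x, hx⟩ ⟨y, hy⟩ hxy
      have : φ x - φ a0 = φ y - φ a0 := congrArg Subtype.val hxy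
      exact Subtype.ext (hφ (sub_left_inj.mp this))
    have hB : B.card ≤ Fintype.card W := by
      rw [← Fintype.card_coe B]
      refine Fintype.card_le_of_injective
        (fun b => ⟨φ b.1, Submodule.subset_span ⟨b.1, b.2, rfl⟩⟩) ?_
      rintro ⟨x, hx⟩ ⟨y, hy⟩ hxy
      exact Subtype.ext (hφ (congrArg Subtype.val hxy))
    have hVfin : finrank (ZMod 2) (Fin n → ZMod 2) = n := by
      rw [Module.finrank_pi, Fintype.card_fin]
    have hcardU : Fintype.card U = 2 ^ finrank (ZMod 2) U := by
      rw [card_eq_pow_finrank (K := ZMod 2), ZMod.card]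
    have hcardW : Fintype.card W = 2 ^ finrank (ZMod 2) W := by
      rw [card_eq_pow_finrank (K := ZMod 2), ZMod.card]
    have horth : finrank (ZMod 2) U = n - finrank (ZMod 2) W := by
      rw [hU, LinearMap.BilinForm.finrank_orthogonal hnd, hVfin]
    have hWle : finrank (ZMod 2) W ≤ n := by
      have := Submodule.finrank_le W
      rwa [hVfin] at this
    calc A.card * B.card ≤ Fintype.card U * Fintype.card W :=
          Nat.mul_le_mul hA hB
      _ = 2 ^ (finrank (ZMod 2) U + finrank (ZMod 2) W) := by
          rw [hcardU, hcardW, pow_add]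
      _ ≤ 2 ^ n := Nat.pow_le_pow_right (by norm_num) (by omega)
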